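/- For every fixed y ∈ I_α^H, the function x ↦ κ_α^H(x,y) = k_α^H( (k_α^H)^{-1}(x) ∗ (k_α^H)^{-1}(y) ) is convex on I_α^H when 0 < α < 1 or 2 < α ≤ 3, and concave on I_α^H when 1 < α ≤ 2 or α ≥ 3 (and symmetrically in the second argument for fixed first argument). -/

import Mathlib

open Real

noncomputable section

/-- Binary convolution `a∗b = a(1-b) + (1-a)b`. -/
def bconv (a b : ℝ) : ℝ := a * (1 - b) + (1 - a) * b

/-- Binary Rényi entropy `h_α(p) = (1/(1-α))·log(p^α + (1-p)^α)`. -/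
def binH (α p : ℝ) : ℝ := (1 / (1 - α)) * Real.log (p ^ α + (1 - p) ^ α)

/-- Inverse of `h_α` as a map `[0, log 2] → [0, 1/2]`. -/
def binHInv (α : ℝ) : ℝ → ℝ := Function.invFunOn (binH α) (Set.Icc 0 (1/2))

/-- `k_α^A(p) = (p^α + (1-p)^α)^{1/α}`. -/
def kA (α p : ℝ) : ℝ := (p ^ α + (1 - p) ^ α) ^ (1/α)

/-- Inverse of `k_α^A`, mapping `I_α^A` back to `[0,1/2]`. -/
def kAInv (α : ℝ) : ℝ → ℝ := Function.invFunOn (kA α) (Set.Icc 0 (1/2))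

/-- `δ_α^A = 2^{(1-α)/α}`. -/
def deltaA (α : ℝ) : ℝ := (2 : ℝ) ^ ((1 - α)/α)

/-- The closed interval `I_α^A` with endpoints `1` and `δ_α^A`. -/
def IA (α : ℝ) : Set ℝ := Set.uIcc 1 (deltaA α)

/-- `κ_α^A(x,y) = k_α^A((k_α^A)⁻¹(x) ∗ (k_α^A)⁻¹(y))`. -/
def kkA (α x y : ℝ) : ℝ := kA α (bconv (kAInv α x) (kAInv α y))

/-- `k_α^H(p) = p^α + (1-p)^α`. -/
def kH (α p : ℝ) : ℝ := p ^ α + (1 - p) ^ α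

/-- Inverse of `k_α^H`, mapping `I_α^H` back to `[0,1/2]`. -/
def kHInv (α : ℝ) : ℝ → ℝ := Function.invFunOn (kH α) (Set.Icc 0 (1/2))

/-- `δ_α^H = 2^{1-α}`. -/
def deltaH (α : ℝ) : ℝ := (2 : ℝ) ^ (1 - α)

/-- The closed interval `I_α^H` with endpoints `1` and `δ_α^H`. -/
def IH (α : ℝ) : Set ℝ := Set.uIcc 1 (deltaH α)

/-- `κ_α^H(x,y) = k_α^H((k_α^H)⁻¹(x) ∗ (k_α^H)⁻¹(y))`. -/
def kkH (α x y : ℝ) : ℝ := kH α (bconv (kHInv α x) (kHInv α y))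

/-- `ĥ_α(x,y) = h_α(h_α⁻¹(x) ∗ h_α⁻¹(y))`. -/
def hhat (α x y : ℝ) : ℝ := binH α (bconv (binHInv α x) (binHInv α y))

/-- Marginal on `Y` of a joint pmf. -/
def margY {X Y : Type*} [Fintype X] (p : X → Y → ℝ) (y : Y) : ℝ := ∑ x, p x y

/-- A joint pmf: nonnegative entries summing to one. -/
def IsPmf {X Y : Type*} [Fintype X] [Fintype Y] (p : X → Y → ℝ) : Prop :=
  (∀ x y, 0 ≤ p x y) ∧ ∑ x, ∑ y, p x y = 1

/-- Arimoto conditional Rényi entropy `H_α^A(X|Y)`. -/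
def condA (α : ℝ) {X Y : Type*} [Fintype X] [Fintype Y] (p : X → Y → ℝ) : ℝ :=
  (α / (1 - α)) * Real.log (∑ y, margY p y * (∑ x, (p x y / margY p y) ^ α) ^ (1/α))

/-- Hayashi conditional Rényi entropy `H_α^H(X|Y)`. -/
def condH (α : ℝ) {X Y : Type*} [Fintype X] [Fintype Y] (p : X → Y → ℝ) : ℝ :=
  (1 / (1 - α)) * Real.log (∑ y, ∑ x, margY p y * (p x y / margY p y) ^ α)

/-- Jizba–Arimitsu conditional Rényi entropy `H_α^J(X|Y)`. -/
def condJ (α : ℝ) {X Y : Type*} [Fintype X] [Fintype Y] (p : X → Y → ℝ) : ℝ :=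
  (1 / (1 - α)) * (Real.log (∑ x, ∑ y, p x y ^ α) - Real.log (∑ y, margY p y ^ α))

/-- Cachin conditional Rényi entropy `H_α^C(X|Y)`. -/
def condC (α : ℝ) {X Y : Type*} [Fintype X] [Fintype Y] (p : X → Y → ℝ) : ℝ :=
  (1 / (1 - α)) * ∑ y, margY p y * Real.log (∑ x, (p x y / margY p y) ^ α)

/-- `K_α^A(X|Y) = exp(((1-α)/α)·H_α^A(X|Y))`. -/
def KA (α : ℝ) {X Y : Type*} [Fintype X] [Fintype Y] (p : X → Y → ℝ) : ℝ :=
  Real.exp (((1 - α)/α) * condA α p)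

/-- `K_α^H(X|Y) = exp((1-α)·H_α^H(X|Y))`. -/
def KH (α : ℝ) {X Y : Type*} [Fintype X] [Fintype Y] (p : X → Y → ℝ) : ℝ :=
  Real.exp ((1 - α) * condH α p)

/-- `K_α^J(X|Y) = exp((1-α)·H_α^J(X|Y))`. -/
def KJ (α : ℝ) {X Y : Type*} [Fintype X] [Fintype Y] (p : X → Y → ℝ) : ℝ :=
  Real.exp ((1 - α) * condJ α p)

/-- Joint pmf of `(X₁+X₂, (Y₁,Y₂))` for independent pairs `(X₁,Y₁)`, `(X₂,Y₂)`. -/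
def combine {Y1 Y2 : Type*} (p1 : Bool → Y1 → ℝ) (p2 : Bool → Y2 → ℝ) :
    Bool → Y1 × Y2 → ℝ :=
  fun z y => ∑ x : Bool, p1 x y.1 * p2 (Bool.xor x z) y.2

/-- `k_∞^A(p) = max{p, 1-p}`. -/
def kInf (p : ℝ) : ℝ := max p (1 - p)

/-- Binary min-entropy `h_∞(p) = -log max{p, 1-p}`. -/
def binHInf (p : ℝ) : ℝ := - Real.log (max p (1 - p))

/-- Inverse of the restriction of `h_∞` to `[0,1/2]`. -/
def binHInfInv : ℝ → ℝ := Function.invFunOn binHInf (Set.Icc 0 (1/2))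

/-- Conditional min-entropy `H_∞(X|Y)` for binary `X`. -/
def condInf {Y : Type*} [Fintype Y] (p : Bool → Y → ℝ) : ℝ :=
  - Real.log (∑ y, margY p y * max (p false y / margY p y) (p true y / margY p y))

/-- Unconditional Rényi entropy of a finitely supported distribution. -/
def renyiEnt (α : ℝ) {X : Type*} [Fintype X] (p : X → ℝ) : ℝ :=
  (1 / (1 - α)) * Real.log (∑ x, p x ^ α)

/-- Distribution of the mod-2 sum of two independent binary random variables. -/
def sumDist (p1 p2 : Bool → ℝ) : Bool → ℝ := fun z => ∑ x : Bool, p1 x * p2 (Bool.xor x z)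

lemma two_sinh_mul_cosh (u v : ℝ) : sinh (u+v) + sinh (u-v) = 2 * sinh u * cosh v := by
  rw [Real.sinh_add, Real.sinh_sub]; ring

lemma sinh_le_mul {c x : ℝ} (hc0 : 0 ≤ c) (hc1 : c ≤ 1) (hx : 0 ≤ x) :
    sinh (c*x) ≤ c * sinh x := by
  have hder : ∀ t : ℝ, HasDerivAt (fun t => c * sinh t - sinh (c*t))
      (c * cosh t - cosh (c*t) * c) t := by
    intro t
    have h1 : HasDerivAt (fun t : ℝ => c * t) c t := by
      simpa using (hasDerivAt_id t).const_mul c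
    exact ((Real.hasDerivAt_sinh t).const_mul c).sub (h1.sinh)
  have hmono : MonotoneOn (fun t => c * sinh t - sinh (c*t)) (Set.Ici 0) := by
    apply monotoneOn_of_deriv_nonneg (convex_Ici 0)
    · exact fun t _ => ((hder t).continuousAt).continuousWithinAt
    · exact fun t _ => ((hder t).differentiableAt).differentiableWithinAt
    · intro t ht
      rw [interior_Ici] at ht
      rw [(hder t).deriv]
      have h1 : cosh (c*t) ≤ cosh t := by
        rw [Real.cosh_le_cosh]
        rw [abs_of_nonneg (mul_nonneg hc0 ht.le), abs_of_nonneg ht.le]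
        · nlinarith [(show (0:ℝ) < t from ht).le]
      nlinarith
  have := hmono (Set.self_mem_Ici) (by exact hx : x ∈ Set.Ici 0) hx
  simp only [mul_zero, Real.sinh_zero, sub_zero] at this
  linarith [this]

lemma key_cosh_sinh {X Y : ℝ} (hX : 0 ≤ X) (hXY : X ≤ Y) :
    X * cosh X * sinh Y ≤ Y * cosh Y * sinh X := by
  have hY : 0 ≤ Y := hX.trans hXY
  rcases eq_or_lt_of_le (add_nonneg hX hY) with h0 | hpos
  · have hX0 : X = 0 := by linarith
    have hY0 : Y = 0 := by linarith
    simp [hX0, hY0]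
  · have hc0 : 0 ≤ (Y - X) / (X + Y) := div_nonneg (by linarith) (by linarith)
    have hc1 : (Y - X) / (X + Y) ≤ 1 := by
      rw [div_le_one hpos]; linarith
    have h := sinh_le_mul hc0 hc1 (le_of_lt hpos : (0:ℝ) ≤ X + Y)
    rw [div_mul_cancel₀ _ (ne_of_gt hpos)] at h
    -- h : sinh (Y - X) ≤ (Y-X)/(X+Y) * sinh (X+Y)
    have h2 : (X + Y) * sinh (Y - X) ≤ (Y - X) * sinh (X + Y) := by
      have := mul_le_mul_of_nonneg_left h (le_of_lt hpos)
      calc (X+Y) * sinh (Y-X) ≤ (X+Y) * ((Y-X)/(X+Y) * sinh (X+Y)) := this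
        _ = (Y-X) * sinh (X+Y) := by field_simp
    nlinarith [Real.sinh_add X Y, Real.sinh_sub Y X]

lemma sinh_ratio_le {a b x y : ℝ} (ha : 0 ≤ a) (hab : a ≤ b) (hx : 0 < x) (hxy : x ≤ y) :
    sinh (a*y) * sinh (b*x) ≤ sinh (a*x) * sinh (b*y) := by
  rcases eq_or_lt_of_le ha with h0 | hapos
  · simp [← h0]
  have hb : 0 < b := lt_of_lt_of_le hapos hab
  set g : ℝ → ℝ := fun s => sinh (a*s) / sinh (b*s) with hg
  have hder : ∀ s : ℝ, 0 < s → HasDerivAt g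
      ((cosh (a*s) * a * sinh (b*s) - sinh (a*s) * (cosh (b*s) * b)) / (sinh (b*s))^2) s := by
    intro s hs
    have hbs : sinh (b*s) ≠ 0 := ne_of_gt (by rw [Real.sinh_pos_iff]; positivity)
    have hia : HasDerivAt (fun s : ℝ => a * s) a s := by simpa using (hasDerivAt_id s).const_mul a
    have hib : HasDerivAt (fun s : ℝ => b * s) b s := by simpa using (hasDerivAt_id s).const_mul b
    exact (hia.sinh).div (hib.sinh) hbs
  have hanti : AntitoneOn g (Set.Ioi 0) := by
    apply antitoneOn_of_deriv_nonpos (convex_Ioi 0)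
    · intro s hs; exact ((hder s hs).continuousAt).continuousWithinAt
    · rw [interior_Ioi]; intro s hs
      exact ((hder s hs).differentiableAt).differentiableWithinAt
    · rw [interior_Ioi]; intro s hs
      rw [(hder s hs).deriv]
      apply div_nonpos_of_nonpos_of_nonneg _ (sq_nonneg _)
      have hs' : 0 < s := hs
      have := key_cosh_sinh (X := a*s) (Y := b*s)
        (mul_nonneg ha hs'.le) (by nlinarith)
      nlinarith
  have hgy : g y ≤ g x := hanti (by exact hx : x ∈ Set.Ioi 0)
    (by exact lt_of_lt_of_le hx hxy : y ∈ Set.Ioi 0) hxy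
  have hbx : 0 < sinh (b*x) := by rw [Real.sinh_pos_iff]; positivity
  have hby : 0 < sinh (b*y) := by rw [Real.sinh_pos_iff]; nlinarith
  rw [hg, div_le_div_iff₀ hby hbx] at hgy
  linarith

def kd (α p : ℝ) : ℝ := α * (p ^ (α-1) - (1-p) ^ (α-1))
def kdd (α p : ℝ) : ℝ := α * (α-1) * (p ^ (α-2) + (1-p) ^ (α-2))

lemma continuous_kH {α : ℝ} (hα : 0 < α) : Continuous (kH α) := by
  have h1 : Continuous fun p : ℝ => p ^ α := continuous_iff_continuousAt.2
    (fun x => Real.continuousAt_rpow_const x α (Or.inr hα.le))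
  have h2 : Continuous fun p : ℝ => (1-p) ^ α :=
    h1.comp (continuous_const.sub continuous_id)
  exact h1.add h2

lemma hasDerivAt_kH {α p : ℝ} (hp : p ∈ Set.Ioo (0:ℝ) 1) : HasDerivAt (kH α) (kd α p) p := by
  have h1 : HasDerivAt (fun p : ℝ => p ^ α) (α * p ^ (α-1)) p :=
    Real.hasDerivAt_rpow_const (Or.inl (ne_of_gt hp.1))
  have hi : HasDerivAt (fun p : ℝ => 1 - p) (-1) p := by
    simpa using (hasDerivAt_id p).const_sub 1
  have h2 : HasDerivAt (fun p : ℝ => (1-p) ^ α) ((α * (1-p) ^ (α-1)) * (-1)) p :=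
    (Real.hasDerivAt_rpow_const (p := α) (Or.inl (by intro h; nlinarith [hp.2] : (1:ℝ)-p ≠ 0))).comp p hi
  have := h1.add h2
  exact this.congr_deriv (by unfold kd; ring)

lemma hasDerivAt_kd {α p : ℝ} (hp : p ∈ Set.Ioo (0:ℝ) 1) : HasDerivAt (kd α) (kdd α p) p := by
  have h1 : HasDerivAt (fun p : ℝ => p ^ (α-1)) ((α-1) * p ^ (α-1-1)) p :=
    Real.hasDerivAt_rpow_const (Or.inl (ne_of_gt hp.1))
  have hi : HasDerivAt (fun p : ℝ => 1 - p) (-1) p := by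
    simpa using (hasDerivAt_id p).const_sub 1
  have h2 : HasDerivAt (fun p : ℝ => (1-p) ^ (α-1)) (((α-1) * (1-p) ^ (α-1-1)) * (-1)) p :=
    (Real.hasDerivAt_rpow_const (p := α-1) (Or.inl (by intro h; nlinarith [hp.2] : (1:ℝ)-p ≠ 0))).comp p hi
  have := (h1.sub h2).const_mul α
  have e : α - 1 - 1 = α - 2 := by ring
  rw [e] at this
  exact this.congr_deriv (by unfold kdd; ring)

lemma kd_pos {α p : ℝ} (hα : 0 < α) (h1 : α < 1) (hp : p ∈ Set.Ioo (0:ℝ) (1/2)) :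
    0 < kd α p := by
  have h := Real.rpow_lt_rpow_of_neg (by linarith [hp.1] : (0:ℝ) < p)
    (by linarith [hp.2] : p < 1 - p) (by linarith : α - 1 < 0)
  unfold kd
  have : (0:ℝ) < p ^ (α-1) - (1-p) ^ (α-1) := sub_pos.mpr h
  positivity

lemma kd_neg {α p : ℝ} (h1 : 1 < α) (hp : p ∈ Set.Ioo (0:ℝ) (1/2)) :
    kd α p < 0 := by
  have h := Real.rpow_lt_rpow (le_of_lt hp.1)
    (by linarith [hp.2] : p < 1 - p) (by linarith : 0 < α - 1)
  unfold kd
  have hα : 0 < α := by linarith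
  nlinarith

lemma kd_ne {α p : ℝ} (hα : 0 < α) (hα1 : α ≠ 1) (hp : p ∈ Set.Ioo (0:ℝ) (1/2)) :
    kd α p ≠ 0 := by
  rcases lt_or_gt_of_ne hα1 with h | h
  · exact ne_of_gt (kd_pos hα h hp)
  · exact ne_of_lt (kd_neg h hp)

lemma kH_zero {α : ℝ} (hα : 0 < α) : kH α 0 = 1 := by
  unfold kH
  rw [Real.zero_rpow (ne_of_gt hα)]
  norm_num

lemma kH_half {α : ℝ} : kH α (1/2) = deltaH α := by
  unfold kH deltaH
  have h : (1:ℝ) - 1/2 = 1/2 := by norm_num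
  rw [h]
  have h1 : ((1:ℝ)/2) ^ α = 2 ^ (-α) := by
    rw [one_div, ← Real.rpow_neg_one (2:ℝ), ← Real.rpow_mul (by norm_num : (0:ℝ) ≤ 2)]
    norm_num
  have h2 : (2:ℝ) ^ (1-α) = 2 ^ (1:ℝ) * 2 ^ (-α) := by
    rw [← Real.rpow_add (by norm_num : (0:ℝ) < 2)]; ring_nf
  rw [h1, h2, Real.rpow_one]; ring

lemma kH_strictMonoOn {α : ℝ} (hα : 0 < α) (h1 : α < 1) :
    StrictMonoOn (kH α) (Set.Icc 0 (1/2)) := by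
  apply strictMonoOn_of_deriv_pos (convex_Icc _ _) (continuous_kH hα).continuousOn
  rw [interior_Icc]
  intro p hp
  rw [(hasDerivAt_kH ⟨hp.1, by linarith [hp.2]⟩).deriv]
  exact kd_pos hα h1 hp

lemma kH_strictAntiOn {α : ℝ} (h1 : 1 < α) :
    StrictAntiOn (kH α) (Set.Icc 0 (1/2)) := by
  apply strictAntiOn_of_deriv_neg (convex_Icc _ _) (continuous_kH (by linarith)).continuousOn
  rw [interior_Icc]
  intro p hp
  rw [(hasDerivAt_kH ⟨hp.1, by linarith [hp.2]⟩).deriv]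
  exact kd_neg h1 hp

lemma one_lt_deltaH {α : ℝ} (h1 : α < 1) : 1 < deltaH α :=
  Real.one_lt_rpow_iff_of_pos (by norm_num) |>.mpr (Or.inl ⟨by norm_num, by linarith⟩)

lemma deltaH_lt_one {α : ℝ} (h1 : 1 < α) : deltaH α < 1 := by
  unfold deltaH
  rw [show (1:ℝ) = (2:ℝ) ^ (0:ℝ) by simp]
  exact Real.rpow_lt_rpow_of_exponent_lt (by norm_num) (by linarith)

lemma exists_kH_inv {α : ℝ} (hα : 0 < α) {x : ℝ} (hx : x ∈ IH α) :
    ∃ p ∈ Set.Icc (0:ℝ) (1/2), kH α p = x := by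
  have h := intermediate_value_uIcc (a := (0:ℝ)) (b := 1/2)
    (f := kH α) (continuous_kH hα).continuousOn
  rw [kH_zero hα, kH_half] at h
  have hx' : x ∈ kH α '' Set.uIcc 0 (1/2) := h hx
  obtain ⟨p, hp, hpx⟩ := hx'
  exact ⟨p, by rwa [Set.uIcc_of_le (by norm_num : (0:ℝ) ≤ 1/2)] at hp, hpx⟩

lemma kHInv_mem {α : ℝ} (hα : 0 < α) {x : ℝ} (hx : x ∈ IH α) :
    kHInv α x ∈ Set.Icc (0:ℝ) (1/2) :=
  Function.invFunOn_mem (exists_kH_inv hα hx)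

lemma kH_kHInv {α : ℝ} (hα : 0 < α) {x : ℝ} (hx : x ∈ IH α) :
    kH α (kHInv α x) = x :=
  Function.invFunOn_eq (exists_kH_inv hα hx)

lemma kH_injOn {α : ℝ} (hα : 0 < α) (hα1 : α ≠ 1) :
    Set.InjOn (kH α) (Set.Icc 0 (1/2)) := by
  rcases lt_or_gt_of_ne hα1 with h | h
  · exact (kH_strictMonoOn hα h).injOn
  · exact (kH_strictAntiOn h).injOn

lemma kHInv_kH {α : ℝ} (hα : 0 < α) (hα1 : α ≠ 1) {p : ℝ} (hp : p ∈ Set.Icc (0:ℝ) (1/2)) :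
    kHInv α (kH α p) = p :=
  (kH_injOn hα hα1).leftInvOn_invFunOn hp

lemma kH_mapsTo {α : ℝ} (hα : 0 < α) (hα1 : α ≠ 1) :
    Set.MapsTo (kH α) (Set.Icc 0 (1/2)) (IH α) := by
  intro p hp
  rcases lt_or_gt_of_ne hα1 with h | h
  · have h0 : kH α 0 ≤ kH α p :=
      (kH_strictMonoOn hα h).monotoneOn (Set.left_mem_Icc.mpr (by norm_num)) hp hp.1
    have h2 : kH α p ≤ kH α (1/2) :=
      (kH_strictMonoOn hα h).monotoneOn hp (Set.right_mem_Icc.mpr (by norm_num)) hp.2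
    rw [kH_zero hα] at h0; rw [kH_half] at h2
    rw [IH, Set.uIcc_of_le (one_lt_deltaH h).le]
    exact ⟨h0, h2⟩
  · have h0 : kH α p ≤ kH α 0 :=
      (kH_strictAntiOn h).antitoneOn (Set.left_mem_Icc.mpr (by norm_num)) hp hp.1
    have h2 : kH α (1/2) ≤ kH α p :=
      (kH_strictAntiOn h).antitoneOn hp (Set.right_mem_Icc.mpr (by norm_num)) hp.2
    rw [kH_zero hα] at h0; rw [kH_half] at h2
    rw [IH, Set.uIcc_of_ge (deltaH_lt_one h).le]
    exact ⟨h2, h0⟩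

lemma continuousOn_kHInv {α : ℝ} (hα : 0 < α) (hα1 : α ≠ 1) :
    ContinuousOn (kHInv α) (IH α) := by
  haveI : CompactSpace (Set.Icc (0:ℝ) (1/2)) := isCompact_iff_compactSpace.mp isCompact_Icc
  set e : Set.Icc (0:ℝ) (1/2) ≃ IH α :=
    { toFun := fun p => ⟨kH α p, kH_mapsTo hα hα1 p.2⟩
      invFun := fun x => ⟨kHInv α x, kHInv_mem hα x.2⟩
      left_inv := fun p => Subtype.ext (kHInv_kH hα hα1 p.2)
      right_inv := fun x => Subtype.ext (kH_kHInv hα x.2) } with he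
  have hc : Continuous e := Continuous.subtype_mk
    ((continuous_kH hα).comp continuous_subtype_val) _
  rw [continuousOn_iff_continuous_restrict]
  have : Set.domRestrict (IH α) (kHInv α)
      = Subtype.val ∘ (hc.homeoOfEquivCompactToT2 (f := e)).symm := by
    funext x; rfl
  rw [this]
  exact continuous_subtype_val.comp (hc.homeoOfEquivCompactToT2 (f := e)).symm.continuous

lemma kHInv_monotoneOn {α : ℝ} (hα : 0 < α) (h1 : α < 1) :
    MonotoneOn (kHInv α) (IH α) := by
  intro x hx y hy hxy
  by_contra h
  push_neg at h
  have := (kH_strictMonoOn hα h1) (kHInv_mem hα hy) (kHInv_mem hα hx) h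
  rw [kH_kHInv hα hx, kH_kHInv hα hy] at this
  linarith

lemma kHInv_antitoneOn {α : ℝ} (h1 : 1 < α) :
    AntitoneOn (kHInv α) (IH α) := by
  have hα : 0 < α := by linarith
  intro x hx y hy hxy
  by_contra h
  push_neg at h
  have := (kH_strictAntiOn h1) (kHInv_mem hα hx) (kHInv_mem hα hy) h
  rw [kH_kHInv hα hx, kH_kHInv hα hy] at this
  linarith

lemma kHInv_mem_interior {α : ℝ} (hα : 0 < α) (hα1 : α ≠ 1) {x : ℝ}
    (hx : x ∈ interior (IH α)) : kHInv α x ∈ Set.Ioo (0:ℝ) (1/2) := by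
  have hxIH : x ∈ IH α := interior_subset hx
  have hmem := kHInv_mem hα hxIH
  have hone : x ≠ 1 ∧ x ≠ deltaH α := by
    rw [IH, Set.uIcc, interior_Icc] at hx
    rcases le_total (1:ℝ) (deltaH α) with h | h
    · rw [inf_eq_left.mpr h, sup_eq_right.mpr h] at hx
      exact ⟨ne_of_gt hx.1, ne_of_lt hx.2⟩
    · rw [inf_eq_right.mpr h, sup_eq_left.mpr h] at hx
      exact ⟨ne_of_lt hx.2, ne_of_gt hx.1⟩
  constructor
  · rcases eq_or_lt_of_le hmem.1 with h0 | h0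
    · exfalso
      apply hone.1
      rw [← kH_kHInv hα hxIH, ← h0, kH_zero hα]
    · exact h0
  · rcases eq_or_lt_of_le hmem.2 with h0 | h0
    · exfalso
      apply hone.2
      rw [← kH_kHInv hα hxIH, h0, kH_half]
    · exact h0

lemma hasDerivAt_kHInv {α : ℝ} (hα : 0 < α) (hα1 : α ≠ 1) {x : ℝ}
    (hx : x ∈ interior (IH α)) :
    HasDerivAt (kHInv α) (kd α (kHInv α x))⁻¹ x := by
  have hmem := kHInv_mem_interior hα hα1 hx
  apply HasDerivAt.of_local_left_inverse
  · exact (continuousOn_kHInv hα hα1).continuousAt (mem_interior_iff_mem_nhds.mp hx)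
  · exact hasDerivAt_kH ⟨hmem.1, by linarith [hmem.2]⟩
  · exact kd_ne hα hα1 hmem
  · filter_upwards [isOpen_interior.mem_nhds hx] with y hy
    exact kH_kHInv hα (interior_subset hy)

-- substitution identities
lemma rpow_eq_sqrt_exp {z c : ℝ} (hz : 0 < z) (hz1 : z < 1) :
    z ^ c = (Real.sqrt (z*(1-z))) ^ c * Real.exp (-(c * (Real.log ((1-z)/z) / 2)))
    ∧ (1-z) ^ c = (Real.sqrt (z*(1-z))) ^ c * Real.exp (c * (Real.log ((1-z)/z) / 2)) := by
  have h1z : 0 < 1 - z := by linarith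
  have hm : 0 < Real.sqrt (z*(1-z)) := Real.sqrt_pos.mpr (by positivity)
  have hlm : Real.log (Real.sqrt (z*(1-z))) = (Real.log z + Real.log (1-z))/2 := by
    rw [Real.log_sqrt (by positivity), Real.log_mul (ne_of_gt hz) (ne_of_gt h1z)]
  have hls : Real.log ((1-z)/z) = Real.log (1-z) - Real.log z :=
    Real.log_div (ne_of_gt h1z) (ne_of_gt hz)
  constructor
  · rw [Real.rpow_def_of_pos hz, Real.rpow_def_of_pos hm, ← Real.exp_add, hlm, hls]
    ring_nf
  · rw [Real.rpow_def_of_pos h1z, Real.rpow_def_of_pos hm, ← Real.exp_add, hlm, hls]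
    ring_nf

lemma kd_eq_sinh {α z : ℝ} (hz : 0 < z) (hz1 : z < 1) :
    kd α z = -2 * α * (Real.sqrt (z*(1-z))) ^ (α-1)
      * Real.sinh ((α-1) * (Real.log ((1-z)/z) / 2)) := by
  obtain ⟨h1, h2⟩ := rpow_eq_sqrt_exp (c := α-1) hz hz1
  unfold kd
  rw [h1, h2, Real.sinh_eq]
  ring

lemma kdd_eq_cosh {α z : ℝ} (hz : 0 < z) (hz1 : z < 1) :
    kdd α z = 2 * α * (α-1) * (Real.sqrt (z*(1-z))) ^ (α-2)
      * Real.cosh ((α-2) * (Real.log ((1-z)/z) / 2)) := by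
  obtain ⟨h1, h2⟩ := rpow_eq_sqrt_exp (c := α-2) hz hz1
  unfold kdd
  rw [h1, h2, Real.cosh_eq]
  ring

lemma one_sub_two_mul_eq_sinh {z : ℝ} (hz : 0 < z) (hz1 : z < 1) :
    1 - 2*z = 2 * Real.sqrt (z*(1-z)) * Real.sinh (Real.log ((1-z)/z) / 2) := by
  obtain ⟨h1, h2⟩ := rpow_eq_sqrt_exp (c := (1:ℝ)) hz hz1
  rw [Real.rpow_one] at h1 h2
  rw [Real.rpow_one] at h1 h2
  rw [Real.sinh_eq]
  simp only [one_mul] at h1 h2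
  linarith

def sOf (z : ℝ) : ℝ := Real.log ((1-z)/z) / 2
def mOf (z : ℝ) : ℝ := Real.sqrt (z*(1-z))

lemma sOf_pos {z : ℝ} (hz : 0 < z) (hz1 : z < 1/2) : 0 < sOf z := by
  unfold sOf
  have : 1 < (1-z)/z := (one_lt_div hz).mpr (by linarith)
  have := Real.log_pos this
  linarith

lemma mOf_pos {z : ℝ} (hz : 0 < z) (hz1 : z < 1) : 0 < mOf z :=
  Real.sqrt_pos.mpr (by nlinarith)

lemma bconv_mem {p b : ℝ} (hp : p ∈ Set.Ioo (0:ℝ) (1/2)) (hb : b ∈ Set.Ioo (0:ℝ) (1/2)) :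
    bconv p b ∈ Set.Ioo (0:ℝ) (1/2) ∧ p < bconv p b := by
  obtain ⟨hp0, hp2⟩ := hp; obtain ⟨hb0, hb2⟩ := hb
  unfold bconv
  refine ⟨⟨by nlinarith, by nlinarith⟩, by nlinarith⟩

lemma sOf_lt {p q : ℝ} (hp : 0 < p) (hpq : p < q) (hq : q < 1) : sOf q < sOf p := by
  unfold sOf
  have h1 : (1-q)/q < (1-p)/p := by
    rw [div_lt_div_iff₀ (by linarith) hp]
    nlinarith
  have h2 : (0:ℝ) < (1-q)/q := by
    apply div_pos (by linarith) (by linarith)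
  have := Real.log_lt_log h2 h1
  linarith

-- the core identity
lemma E_identity {α p b : ℝ} (hp : p ∈ Set.Ioo (0:ℝ) (1/2)) (hb : b ∈ Set.Ioo (0:ℝ) (1/2)) :
    Real.sinh (sOf p) * ((1-2*b) * kdd α (bconv p b) * kd α p - kd α (bconv p b) * kdd α p)
    = 2 * α^2 * (α-1) * (mOf p) ^ (α-2) * (mOf (bconv p b)) ^ (α-1) *
      (Real.sinh ((α-1) * sOf (bconv p b)) * Real.sinh ((3-α) * sOf p)
        - Real.sinh ((3-α) * sOf (bconv p b)) * Real.sinh ((α-1) * sOf p)) := by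
  set q := bconv p b with hq
  obtain ⟨hqm, hpq⟩ := bconv_mem hp hb
  have hp1 : p < 1 := by linarith [hp.2]
  have hq1 : q < 1 := by linarith [hqm.2]
  set s := sOf p with hs
  set t := sOf q with ht
  set m := mOf p with hm
  set r := mOf q with hr
  have hmpos : 0 < m := mOf_pos hp.1 hp1
  have hrpos : 0 < r := mOf_pos hqm.1 hq1
  have hspos : 0 < s := sOf_pos hp.1 hp.2
  -- relation (1-2b) * (m * sinh s) = r * sinh t
  have hrel : (1-2*b) * (2 * m * Real.sinh s) = 2 * r * Real.sinh t := by
    have h1 : 1 - 2*p = 2 * m * Real.sinh s := one_sub_two_mul_eq_sinh hp.1 hp1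
    have h2 : 1 - 2*q = 2 * r * Real.sinh t := one_sub_two_mul_eq_sinh hqm.1 hq1
    have h3 : 1 - 2*q = (1-2*p)*(1-2*b) := by rw [hq]; unfold bconv; ring
    linear_combination h2 - h3 - h1 * (1-2*b)
  -- rpow split
  have hmsplit : m ^ (α-1) = m ^ (α-2) * m := by
    rw [show α - 1 = (α-2) + 1 by ring, Real.rpow_add_one (ne_of_gt hmpos)]
  have hrsplit : r ^ (α-1) = r ^ (α-2) * r := by
    rw [show α - 1 = (α-2) + 1 by ring, Real.rpow_add_one (ne_of_gt hrpos)]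
  -- product to sum
  have hps : 2 * Real.sinh s * Real.cosh ((α-2)*s)
      = Real.sinh ((α-1)*s) + Real.sinh ((3-α)*s) := by
    have := two_sinh_mul_cosh s ((α-2)*s)
    rw [show s + (α-2)*s = (α-1)*s by ring, show s - (α-2)*s = (3-α)*s by ring] at this
    linarith
  have hpt : 2 * Real.sinh t * Real.cosh ((α-2)*t)
      = Real.sinh ((α-1)*t) + Real.sinh ((3-α)*t) := by
    have := two_sinh_mul_cosh t ((α-2)*t)
    rw [show t + (α-2)*t = (α-1)*t by ring, show t - (α-2)*t = (3-α)*t by ring] at this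
    linarith
  rw [kd_eq_sinh hp.1 hp1, kd_eq_sinh hqm.1 hq1, kdd_eq_cosh hp.1 hp1, kdd_eq_cosh hqm.1 hq1]
  rw [show Real.sqrt (p*(1-p)) = m from rfl, show Real.sqrt (q*(1-q)) = r from rfl,
    show Real.log ((1-p)/p)/2 = s from rfl, show Real.log ((1-q)/q)/2 = t from rfl]
  rw [hmsplit, hrsplit]
  linear_combination
    (-2*(α^2*(α-1)*r^(α-2)*m^(α-2)) * Real.cosh ((α-2)*t) * Real.sinh ((α-1)*s)) * hrel
    + (-2*(α^2*(α-1)*r^(α-2)*m^(α-2)) * r * Real.sinh ((α-1)*s)) * hpt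
    + (2*(α^2*(α-1)*r^(α-2)*m^(α-2)) * r * Real.sinh ((α-1)*t)) * hps

lemma bconv_zero (p : ℝ) : bconv p 0 = p := by unfold bconv; ring
lemma bconv_half (p : ℝ) : bconv p (1/2) = 1/2 := by unfold bconv; ring
lemma kd_half (α : ℝ) : kd α (1/2) = 0 := by unfold kd; norm_num

lemma E_sign {α p b : ℝ} (hα : 0 < α)
    (hp : p ∈ Set.Ioo (0:ℝ) (1/2)) (hb : b ∈ Set.Icc (0:ℝ) (1/2)) :
    ((α < 1 ∨ (1 < α ∧ α ≤ 2) ∨ 3 ≤ α) →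
      0 ≤ (1-2*b) * kdd α (bconv p b) * kd α p - kd α (bconv p b) * kdd α p) ∧
    ((2 ≤ α ∧ α ≤ 3) →
      (1-2*b) * kdd α (bconv p b) * kd α p - kd α (bconv p b) * kdd α p ≤ 0) := by
  rcases eq_or_lt_of_le hb.1 with hb0 | hb0
  · rw [← hb0, bconv_zero]
    constructor <;> intro _ <;> nlinarith [sq_nonneg (kd α p)]
  rcases eq_or_lt_of_le hb.2 with hb2 | hb2
  · rw [hb2, bconv_half, kd_half]
    norm_num
  have hbI : b ∈ Set.Ioo (0:ℝ) (1/2) := ⟨hb0, hb2⟩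
  obtain ⟨hqm, hpq⟩ := bconv_mem hp hbI
  have hp1 : p < 1 := by linarith [hp.2]
  have hq1 : bconv p b < 1 := by linarith [hqm.2]
  set q := bconv p b with hq
  set s := sOf p with hs
  set t := sOf q with ht
  have hspos : 0 < s := sOf_pos hp.1 hp.2
  have htpos : 0 < t := sOf_pos hqm.1 hqm.2
  have hts : t < s := sOf_lt hp.1 hpq hq1
  have hid := E_identity (α := α) hp hbI
  rw [← hq, ← hs, ← ht] at hid
  have hmpos : (0:ℝ) < (mOf p) ^ (α-2) := Real.rpow_pos_of_pos (mOf_pos hp.1 hp1) _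
  have hrpos : (0:ℝ) < (mOf q) ^ (α-2+1) := Real.rpow_pos_of_pos (mOf_pos hqm.1 hq1) _
  have hrpos' : (0:ℝ) < (mOf q) ^ (α-1) := by
    rw [show α-1 = α-2+1 by ring]; exact hrpos
  have hsinh : 0 < Real.sinh s := by rwa [Real.sinh_pos_iff]
  set G := Real.sinh ((α-1) * t) * Real.sinh ((3-α) * s)
    - Real.sinh ((3-α) * t) * Real.sinh ((α-1) * s) with hG
  have hfac : 0 < 2 * α^2 * (mOf p) ^ (α-2) * (mOf q) ^ (α-1) := by positivity
  constructor
  · intro hcase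
    have hGsign : 0 ≤ (α-1) * G := by
      rcases hcase with h1 | ⟨h1, h2⟩ | h3
      · -- α < 1
        have hr := sinh_ratio_le (a := 1-α) (b := 3-α)
          (by linarith) (by linarith) htpos hts.le
        have e1 : Real.sinh ((α-1)*t) = -Real.sinh ((1-α)*t) := by
          rw [show (α-1)*t = -((1-α)*t) by ring, Real.sinh_neg]
        have e2 : Real.sinh ((α-1)*s) = -Real.sinh ((1-α)*s) := by
          rw [show (α-1)*s = -((1-α)*s) by ring, Real.sinh_neg]
        rw [hG, e1, e2]
        nlinarith [hr]
      · -- 1 < α ≤ 2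
        have hr := sinh_ratio_le (a := α-1) (b := 3-α)
          (by linarith) (by linarith) htpos hts.le
        rw [hG]
        nlinarith [hr]
      · -- 3 ≤ α
        have hr := sinh_ratio_le (a := α-3) (b := α-1)
          (by linarith) (by linarith) htpos hts.le
        have e1 : Real.sinh ((3-α)*t) = -Real.sinh ((α-3)*t) := by
          rw [show (3-α)*t = -((α-3)*t) by ring, Real.sinh_neg]
        have e2 : Real.sinh ((3-α)*s) = -Real.sinh ((α-3)*s) := by
          rw [show (3-α)*s = -((α-3)*s) by ring, Real.sinh_neg]
        rw [hG, e1, e2]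
        nlinarith [hr]
    have : 0 ≤ Real.sinh s * ((1-2*b) * kdd α q * kd α p - kd α q * kdd α p) := by
      rw [hid]
      calc (0:ℝ) ≤ (2 * α^2 * (mOf p) ^ (α-2) * (mOf q) ^ (α-1)) * ((α-1) * G) := by
            exact mul_nonneg hfac.le hGsign
        _ = 2 * α^2 * (α-1) * (mOf p) ^ (α-2) * (mOf q) ^ (α-1) * G := by ring
    exact (mul_nonneg_iff_of_pos_left hsinh).mp this
  · intro ⟨h2, h3⟩
    have hGsign : (α-1) * G ≤ 0 := by
      have hr := sinh_ratio_le (a := 3-α) (b := α-1)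
        (by linarith) (by linarith) htpos hts.le
      have hα1 : 0 ≤ α - 1 := by linarith
      rw [hG]
      nlinarith [hr]
    have : Real.sinh s * ((1-2*b) * kdd α q * kd α p - kd α q * kdd α p) ≤ 0 := by
      rw [hid]
      calc 2 * α^2 * (α-1) * (mOf p) ^ (α-2) * (mOf q) ^ (α-1) * G
          = (2 * α^2 * (mOf p) ^ (α-2) * (mOf q) ^ (α-1)) * ((α-1) * G) := by ring
        _ ≤ 0 := mul_nonpos_of_nonneg_of_nonpos hfac.le hGsign
    exact not_lt.mp (fun hEpos => absurd this (not_le.mpr (mul_pos hsinh hEpos)))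

def Phi (α b : ℝ) : ℝ → ℝ := fun p => (1-2*b) * kd α (bconv p b) / kd α p

lemma bconv_mem' {p b : ℝ} (hp : p ∈ Set.Ioo (0:ℝ) (1/2)) (hb : b ∈ Set.Icc (0:ℝ) (1/2)) :
    bconv p b ∈ Set.Ioo (0:ℝ) 1 := by
  obtain ⟨hp0, hp2⟩ := hp; obtain ⟨hb0, hb2⟩ := hb
  unfold bconv
  constructor <;> nlinarith

lemma hasDerivAt_bconv (b p : ℝ) : HasDerivAt (fun p => bconv p b) (1-2*b) p := by
  have h : HasDerivAt (fun p : ℝ => p * (1-2*b) + b) (1-2*b) p := by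
    simpa using ((hasDerivAt_id p).mul_const (1-2*b)).add_const b
  convert h using 1
  funext z; unfold bconv; ring

lemma hasDerivAt_Phi {α b p : ℝ} (hα : 0 < α) (hα1 : α ≠ 1)
    (hp : p ∈ Set.Ioo (0:ℝ) (1/2)) (hb : b ∈ Set.Icc (0:ℝ) (1/2)) :
    HasDerivAt (Phi α b)
      (((1-2*b) * (kdd α (bconv p b) * (1-2*b)) * kd α p
        - (1-2*b) * kd α (bconv p b) * kdd α p) / (kd α p)^2) p := by
  have hq := bconv_mem' hp hb
  have hnum : HasDerivAt (fun p => (1-2*b) * kd α (bconv p b))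
      ((kdd α (bconv p b) * (1-2*b)) * (1-2*b)) p := by
    have := ((hasDerivAt_kd (α := α) hq).comp p (hasDerivAt_bconv b p)).const_mul (1-2*b)
    exact this.congr_deriv (by ring)
  have hden : HasDerivAt (kd α) (kdd α p) p :=
    hasDerivAt_kd ⟨hp.1, by linarith [hp.2]⟩
  have := hnum.div hden (kd_ne hα hα1 hp)
  exact this.congr_deriv (by ring)

lemma Phi_monotoneOn {α b : ℝ} (hα : 0 < α) (hα1 : α ≠ 1)
    (hcase : α < 1 ∨ (1 < α ∧ α ≤ 2) ∨ 3 ≤ α) (hb : b ∈ Set.Icc (0:ℝ) (1/2)) :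
    MonotoneOn (Phi α b) (Set.Ioo (0:ℝ) (1/2)) := by
  apply monotoneOn_of_deriv_nonneg (convex_Ioo _ _)
  · exact fun p hp => ((hasDerivAt_Phi hα hα1 hp hb).continuousAt).continuousWithinAt
  · rw [interior_Ioo]
    exact fun p hp => ((hasDerivAt_Phi hα hα1 hp hb).differentiableAt).differentiableWithinAt
  · rw [interior_Ioo]
    intro p hp
    rw [(hasDerivAt_Phi hα hα1 hp hb).deriv]
    apply div_nonneg _ (sq_nonneg _)
    have hE := (E_sign hα hp hb).1 hcase
    have hb' : 0 ≤ 1 - 2*b := by linarith [hb.2]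
    nlinarith [hE]

lemma Phi_antitoneOn {α b : ℝ} (hα : 0 < α) (hα1 : α ≠ 1)
    (hcase : 2 ≤ α ∧ α ≤ 3) (hb : b ∈ Set.Icc (0:ℝ) (1/2)) :
    AntitoneOn (Phi α b) (Set.Ioo (0:ℝ) (1/2)) := by
  apply antitoneOn_of_deriv_nonpos (convex_Ioo _ _)
  · exact fun p hp => ((hasDerivAt_Phi hα hα1 hp hb).continuousAt).continuousWithinAt
  · rw [interior_Ioo]
    exact fun p hp => ((hasDerivAt_Phi hα hα1 hp hb).differentiableAt).differentiableWithinAt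
  · rw [interior_Ioo]
    intro p hp
    rw [(hasDerivAt_Phi hα hα1 hp hb).deriv]
    apply div_nonpos_of_nonpos_of_nonneg _ (sq_nonneg _)
    have hE := (E_sign hα hp hb).2 hcase
    have hb' : 0 ≤ 1 - 2*b := by linarith [hb.2]
    nlinarith [hE]

lemma hasDerivAt_F {α b x : ℝ} (hα : 0 < α) (hα1 : α ≠ 1) (hb : b ∈ Set.Icc (0:ℝ) (1/2))
    (hx : x ∈ interior (IH α)) :
    HasDerivAt (fun x => kH α (bconv (kHInv α x) b)) (Phi α b (kHInv α x)) x := by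
  have hpmem := kHInv_mem_interior hα hα1 hx
  have hq := bconv_mem' hpmem hb
  have houter : HasDerivAt (fun p => kH α (bconv p b))
      (kd α (bconv (kHInv α x) b) * (1-2*b)) (kHInv α x) := by
    have := (hasDerivAt_kH (α := α) hq).comp (kHInv α x) (hasDerivAt_bconv b (kHInv α x))
    exact this
  have := houter.comp x (hasDerivAt_kHInv hα hα1 hx)
  exact this.congr_deriv (by unfold Phi; rw [div_eq_mul_inv]; ring)

lemma continuousOn_F {α b : ℝ} (hα : 0 < α) (hα1 : α ≠ 1) :
    ContinuousOn (fun x => kH α (bconv (kHInv α x) b)) (IH α) := by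
  apply (continuous_kH hα).comp_continuousOn
  have h := continuousOn_kHInv hα hα1
  have : (fun x => bconv (kHInv α x) b)
      = fun x => kHInv α x * (1-b) + (1 - kHInv α x) * b := by
    funext x; rfl
  rw [this]
  exact (h.mul continuousOn_const).add ((continuousOn_const.sub h).mul continuousOn_const)

lemma kkH_eq {α b x y : ℝ} (hy : b = kHInv α y) :
    kkH α x y = kH α (bconv (kHInv α x) b) := by rw [hy]; rfl

lemma kkH_convexOn {α : ℝ} (hα : 0 < α) (hcase : α < 1 ∨ (2 < α ∧ α ≤ 3)) {y : ℝ}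
    (hy : y ∈ IH α) : ConvexOn ℝ (IH α) (fun x => kkH α x y) := by
  have hα1 : α ≠ 1 := by rcases hcase with h | ⟨h, _⟩ <;> intro he <;> rw [he] at h <;> linarith
  set b := kHInv α y with hbdef
  have hb : b ∈ Set.Icc (0:ℝ) (1/2) := kHInv_mem hα hy
  have heq : (fun x => kkH α x y) = fun x => kH α (bconv (kHInv α x) b) := by
    funext x; exact kkH_eq hbdef
  rw [heq]
  apply MonotoneOn.convexOn_of_deriv (convex_uIcc _ _) (continuousOn_F hα hα1)
  · exact fun x hx => ((hasDerivAt_F hα hα1 hb hx).differentiableAt).differentiableWithinAt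
  · intro x1 h1 x2 h2 hle
    rw [(hasDerivAt_F hα hα1 hb h1).deriv, (hasDerivAt_F hα hα1 hb h2).deriv]
    have hp1 := kHInv_mem_interior hα hα1 h1
    have hp2 := kHInv_mem_interior hα hα1 h2
    rcases hcase with h | ⟨h2', h3'⟩
    · have hmono := Phi_monotoneOn hα hα1 (Or.inl h) hb
      have hple : kHInv α x1 ≤ kHInv α x2 :=
        kHInv_monotoneOn hα h (interior_subset h1) (interior_subset h2) hle
      exact hmono hp1 hp2 hple
    · have hanti := Phi_antitoneOn hα hα1 ⟨by linarith, h3'⟩ hb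
      have hple : kHInv α x2 ≤ kHInv α x1 :=
        kHInv_antitoneOn (by linarith) (interior_subset h1) (interior_subset h2) hle
      exact hanti hp2 hp1 hple

lemma kkH_concaveOn {α : ℝ} (hcase : (1 < α ∧ α ≤ 2) ∨ 3 ≤ α) {y : ℝ}
    (hy : y ∈ IH α) : ConcaveOn ℝ (IH α) (fun x => kkH α x y) := by
  have hgt : 1 < α := by rcases hcase with ⟨h, _⟩ | h <;> linarith
  have hα : 0 < α := by linarith
  have hα1 : α ≠ 1 := by linarith
  set b := kHInv α y with hbdef
  have hb : b ∈ Set.Icc (0:ℝ) (1/2) := kHInv_mem hα hy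
  have heq : (fun x => kkH α x y) = fun x => kH α (bconv (kHInv α x) b) := by
    funext x; exact kkH_eq hbdef
  rw [heq]
  apply AntitoneOn.concaveOn_of_deriv (convex_uIcc _ _) (continuousOn_F hα hα1)
  · exact fun x hx => ((hasDerivAt_F hα hα1 hb hx).differentiableAt).differentiableWithinAt
  · intro x1 h1 x2 h2 hle
    rw [(hasDerivAt_F hα hα1 hb h1).deriv, (hasDerivAt_F hα hα1 hb h2).deriv]
    have hp1 := kHInv_mem_interior hα hα1 h1
    have hp2 := kHInv_mem_interior hα hα1 h2
    have hmono := Phi_monotoneOn hα hα1 (by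
      rcases hcase with ⟨ha, hb'⟩ | h3
      · exact Or.inr (Or.inl ⟨ha, hb'⟩)
      · exact Or.inr (Or.inr h3)) hb
    have hple : kHInv α x2 ≤ kHInv α x1 :=
      kHInv_antitoneOn hgt (interior_subset h1) (interior_subset h2) hle
    exact hmono hp2 hp1 hple

lemma kkH_comm (α x y : ℝ) : kkH α x y = kkH α y x := by
  unfold kkH bconv; ring_nf


/-- Convexity/concavity ranges for `κ_α^H`. -/
theorem stmt_8 (α : ℝ) :
    (((0 < α ∧ α < 1) ∨ (2 < α ∧ α ≤ 3)) →
      (∀ y ∈ IH α, ConvexOn ℝ (IH α) (fun x => kkH α x y)) ∧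
      (∀ x ∈ IH α, ConvexOn ℝ (IH α) (fun y => kkH α x y))) ∧
    (((1 < α ∧ α ≤ 2) ∨ 3 ≤ α) →
      (∀ y ∈ IH α, ConcaveOn ℝ (IH α) (fun x => kkH α x y)) ∧
      (∀ x ∈ IH α, ConcaveOn ℝ (IH α) (fun y => kkH α x y))) := by
  constructor
  · intro hcase
    have hα : 0 < α := by rcases hcase with ⟨h, _⟩ | ⟨h, _⟩ <;> linarith
    have hcase' : α < 1 ∨ (2 < α ∧ α ≤ 3) := by
      rcases hcase with ⟨_, h⟩ | h
      · exact Or.inl h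
      · exact Or.inr h
    refine ⟨fun y hy => kkH_convexOn hα hcase' hy, fun x hx => ?_⟩
    have : (fun y => kkH α x y) = fun y => kkH α y x := by
      funext y; exact kkH_comm α x y
    rw [this]
    exact kkH_convexOn hα hcase' hx
  · intro hcase
    refine ⟨fun y hy => kkH_concaveOn hcase hy, fun x hx => ?_⟩
    have : (fun y => kkH α x y) = fun y => kkH α y x := by
      funext y; exact kkH_comm α x y
    rw [this]
    exact kkH_concaveOn hcase hx
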